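/- arXiv:1106.4403 — 2 statements merged into one kernel-verified Lean document; each statement's English description precedes it below -/
import Mathlib

section
/- The AND gadget computes conjunction: in the triangle graph K3 with input vertices 1,2 and output vertex 3, for any input assignment (a,b) ∈ {0,1}², if vertex i (i=1,2) is initially black exactly when the corresponding input bit is 1 and vertex 3 is initially white, then vertex 3 is black in the final coloring if and only if a = b = 1. -/
/-- The zero forcing closure: `ZFClosure G S v` holds iff vertex `v` eventually
becomes black when the vertices of `S` are initially black and the color-change
rule (a black vertex with exactly one white neighbor forces that neighbor black)
is applied exhaustively. -/
inductive ZFClosure {V : Type*} (G : SimpleGraph V) (S : Set V) : V → Prop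
  | init {v : V} : v ∈ S → ZFClosure G S v
  | force {u v : V} : ZFClosure G S u → G.Adj u v →
      (∀ w, G.Adj u w → w ≠ v → ZFClosure G S w) → ZFClosure G S v

/-- The final coloring (closure) of the initial black set `S`. -/
def zfCl {V : Type*} (G : SimpleGraph V) (S : Set V) : Set V := {v | ZFClosure G S v}

/-- `S` is a zero forcing set iff its final coloring is all of `V`. -/
def IsZeroForcingSet {V : Type*} (G : SimpleGraph V) (S : Set V) : Prop :=
  zfCl G S = Set.univ

/-- The initial coloring of the AND gadget: input vertex `0` is black iff
`a = true`, input vertex `1` is black iff `b = true`, output vertex `2` white. -/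
def andInput (a b : Bool) : Set (Fin 3) :=
  {v | (v = 0 ∧ a = true) ∨ (v = 1 ∧ b = true)}

/-- If the initial black set has at most one element, no forcing is possible
in the triangle, so the closure equals the initial set. -/
lemma zf_sub (S : Set (Fin 3)) (hS : ∀ u v, u ∈ S → v ∈ S → u = v) :
    ∀ v, ZFClosure (⊤ : SimpleGraph (Fin 3)) S v → v ∈ S := by
  intro v h
  induction h with
  | init h => exact h
  | @force u v hu hadj hall ihu ihall =>
    have hex : ∀ u v : Fin 3, ∃ w : Fin 3, w ≠ u ∧ w ≠ v := by decide
    obtain ⟨w, hwu, hwv⟩ := hex u v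
    have hw : w ∈ S := ihall w ((SimpleGraph.top_adj _ _).mpr hwu.symm) hwv
    exact absurd (hS w u hw ihu) hwu

/-- The AND gadget (the triangle `K₃` with inputs `0,1` and output `2`)
computes conjunction: the output vertex ends up black iff both inputs are `1`. -/
theorem and_gadget_correct (a b : Bool) :
    (2 : Fin 3) ∈ zfCl (⊤ : SimpleGraph (Fin 3)) (andInput a b) ↔ (a = true ∧ b = true) := by
  constructor
  · intro h
    by_contra hab
    have hsub : ∀ u v : Fin 3, u ∈ andInput a b → v ∈ andInput a b → u = v := by
      intro u v hu hv
      simp only [andInput, Set.mem_setOf_eq] at hu hv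
      rcases hu with ⟨hu, ha⟩ | ⟨hu, hb⟩ <;> rcases hv with ⟨hv, ha'⟩ | ⟨hv, hb'⟩ <;>
        first
          | (subst hu; subst hv; rfl)
          | (exact absurd ⟨by assumption, by assumption⟩ hab)
    have key := zf_sub (andInput a b) hsub 2 h
    simp only [andInput, Set.mem_setOf_eq] at key
    rcases key with ⟨h1, _⟩ | ⟨h1, _⟩ <;> exact absurd h1 (by decide)
  · rintro ⟨ha, hb⟩
    refine ZFClosure.force (u := 0) (ZFClosure.init ?_) (by decide) ?_
    · exact Or.inl ⟨rfl, ha⟩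
    · intro w hw hne
      have : w = 1 := by
        have h0 : w ≠ 0 := (SimpleGraph.top_adj _ _).mp hw |>.symm
        omega
      subst this
      exact ZFClosure.init (Or.inr ⟨rfl, hb⟩)
end

section
/- The OR gadget computes disjunction: in the graph with vertices {1,2,3,4} and edges {1,3},{1,4},{2,3},{2,4}, where vertex 3 is always initially black, vertices 1,2 are the inputs (black iff the input bit is 1), and vertex 4 is initially white, the final coloring has vertex 4 black if and only if at least one of the input bits is 1. -/
/-- The complete bipartite graph `K_{2,2}` on vertices `0,1,2,3` with parts
`{0,1}` and `{2,3}` (vertices `1,2,3,4` of the paper are `0,1,2,3`). -/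
def K22 : SimpleGraph (Fin 4) :=
  SimpleGraph.fromRel (fun i j => i.val < 2 ∧ 2 ≤ j.val)

/-- The initial coloring of the OR gadget: the ancilla vertex `2` is always
black, input vertex `0` is black iff `a = true`, input vertex `1` iff `b = true`,
output vertex `3` white. -/
def orInput (a b : Bool) : Set (Fin 4) :=
  {v | v = 2 ∨ (v = 0 ∧ a = true) ∨ (v = 1 ∧ b = true)}
lemma k22_adj (u v : Fin 4) : K22.Adj u v ↔ u ≠ v ∧ ((u.val < 2 ∧ 2 ≤ v.val) ∨ (v.val < 2 ∧ 2 ≤ u.val)) := by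
  simp [K22, SimpleGraph.fromRel_adj]

lemma key_ff : ∀ v, ZFClosure K22 (orInput false false) v → v = 2 := by
  intro v hv
  induction hv with
  | init h => simpa [orInput] using h
  | force hu hadj hall ihu ihall =>
    rename_i u v
    subst ihu
    rw [k22_adj] at hadj
    have hv01 : v = 0 ∨ v = 1 := by
      fin_cases v <;> simp_all
    rcases hv01 with rfl | rfl
    · have := ihall 1 (by rw [k22_adj]; decide) (by decide)
      exact absurd this (by decide)
    · have := ihall 0 (by rw [k22_adj]; decide) (by decide)
      exact absurd this (by decide)

/-- The OR gadget (`K_{2,2}` with inputs `0,1`, pre-colored ancilla `2` and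
output `3`) computes disjunction. -/
theorem or_gadget_correct (a b : Bool) :
    (3 : Fin 4) ∈ zfCl K22 (orInput a b) ↔ (a = true ∨ b = true) := by
  constructor
  · intro h
    by_contra hc
    push_neg at hc
    obtain ⟨ha, hb⟩ := hc
    have ha' : a = false := by simpa using ha
    have hb' : b = false := by simpa using hb
    subst ha' hb'
    exact absurd (key_ff 3 h) (by decide)
  · intro h
    have h2 : ZFClosure K22 (orInput a b) 2 := ZFClosure.init (by simp [orInput])
    rcases h with h | h
    · have h0 : ZFClosure K22 (orInput a b) 0 := ZFClosure.init (by simp [orInput, h])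
      exact ZFClosure.force h0 (by rw [k22_adj]; decide) (fun w hw hne => by
        rw [k22_adj] at hw
        have hw2 : w = 2 := by fin_cases w <;> simp_all
        exact hw2 ▸ h2)
    · have h1 : ZFClosure K22 (orInput a b) 1 := ZFClosure.init (by simp [orInput, h])
      exact ZFClosure.force h1 (by rw [k22_adj]; decide) (fun w hw hne => by
        rw [k22_adj] at hw
        have hw2 : w = 2 := by fin_cases w <;> simp_all
        exact hw2 ▸ h2)
end
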